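/- For every real x > 0, sinh(x)/x < exp(x²/4). -/

import Mathlib

open scoped Nat

lemma four_pow_mul_factorial_le (n : ℕ) : 4 ^ n * n ! ≤ (2 * n + 1)! := by
  induction n with
  | zero => simp
  | succ n ih =>
    have h2 : (2 * (n + 1) + 1)! = (2 * n + 3) * ((2 * n + 2) * (2 * n + 1)!) := by
      have e1 : 2 * (n + 1) + 1 = (2 * n + 2) + 1 := by ring
      have e2 : 2 * n + 2 = (2 * n + 1) + 1 := by ring
      rw [e1, Nat.factorial_succ, e2, Nat.factorial_succ, ← e2]
    rw [h2]
    calc 4 ^ (n + 1) * (n + 1)! = (2 * n + 2) * (2 * (4 ^ n * n !)) := by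
          rw [pow_succ, Nat.factorial_succ]; ring
      _ ≤ (2 * n + 2) * (2 * (2 * n + 1)!) :=
          Nat.mul_le_mul_left _ (Nat.mul_le_mul_left 2 ih)
      _ = 2 * ((2 * n + 2) * (2 * n + 1)!) := by ring
      _ ≤ (2 * n + 3) * ((2 * n + 2) * (2 * n + 1)!) := Nat.mul_le_mul_right _ (by omega)

theorem stmt_2 (x : ℝ) (hx : 0 < x) :
    Real.sinh x / x < Real.exp (x ^ 2 / 4) := by
  rw [div_lt_iff₀ hx, mul_comm]
  have hf : HasSum (fun n : ℕ => x ^ (2 * n + 1) / ((2 * n + 1)! : ℝ)) (Real.sinh x) :=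
    Real.hasSum_sinh x
  have hexp : HasSum (fun n : ℕ => ((n ! : ℝ)⁻¹) • (x ^ 2 / 4) ^ n)
      (NormedSpace.exp (x ^ 2 / 4)) := NormedSpace.exp_series_hasSum_exp' (𝕂 := ℝ) (x ^ 2 / 4)
  have hg : HasSum (fun n : ℕ => x * (((n ! : ℝ)⁻¹) • (x ^ 2 / 4) ^ n))
      (x * Real.exp (x ^ 2 / 4)) := by
    rw [Real.exp_eq_exp_ℝ]
    exact hexp.mul_left x
  refine hasSum_lt (i := 1) ?_ ?_ hf hg
  · intro n
    have hxp : 0 < x ^ (2 * n + 1) := pow_pos hx _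
    have key : (4 : ℝ) ^ n * n ! ≤ ((2 * n + 1)! : ℝ) := by
      have := four_pow_mul_factorial_le n
      calc (4 : ℝ) ^ n * n ! = ((4 ^ n * n ! : ℕ) : ℝ) := by push_cast; ring
        _ ≤ ((2 * n + 1)! : ℝ) := Nat.cast_le.mpr this
    have h1 : x * (((n ! : ℝ)⁻¹) • (x ^ 2 / 4) ^ n) = x ^ (2 * n + 1) / (4 ^ n * n !) := by
      rw [smul_eq_mul, div_pow, ← pow_mul]
      field_simp
      ring
    dsimp only
    rw [h1]
    apply div_le_div_of_nonneg_left hxp.le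
    · positivity
    · exact key
  · have h1 : x * (((1! : ℝ)⁻¹) • (x ^ 2 / 4) ^ 1) = x ^ 3 / 4 := by
      norm_num; ring
    have h2 : x ^ (2 * 1 + 1) / ((2 * 1 + 1)! : ℝ) = x ^ 3 / 6 := by
      norm_num [Nat.factorial]
    rw [h1, h2]
    have : 0 < x ^ 3 := pow_pos hx 3
    linarith
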